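/- Let v be a convex function on a domain Ω ⊆ ℝᵐ. Then the set of vectors p ∈ ℝᵐ that belong to the subgradient set ∂v(x) of more than one point x ∈ Ω has Lebesgue measure zero. -/

import Mathlib

open Set Metric MeasureTheory

namespace Stmt16

/-- The subgradient set of `v` at `x`, relative to the set `S`. -/
def subgradientSet {m : ℕ} (S : Set (EuclideanSpace ℝ (Fin m)))
    (v : EuclideanSpace ℝ (Fin m) → ℝ) (x : EuclideanSpace ℝ (Fin m)) :
    Set (EuclideanSpace ℝ (Fin m)) :=
  {p | ∀ y ∈ S, v x + (inner ℝ p (y - x) : ℝ) ≤ v y}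

/-- If a real function on an inner product space is differentiable at `p`, it has at most one
global subgradient at `p`. -/
lemma subgrad_unique {E : Type*} [NormedAddCommGroup E] [InnerProductSpace ℝ E]
    {f : E → ℝ} {p x x' : E} (hd : DifferentiableAt ℝ f p)
    (hx : ∀ q, f p + (inner ℝ x (q - p) : ℝ) ≤ f q)
    (hx' : ∀ q, f p + (inner ℝ x' (q - p) : ℝ) ≤ f q) : x = x' := by
  have key : ∀ y : E, (∀ q, f p + (inner ℝ y (q - p) : ℝ) ≤ f q) →
      ∀ u : E, (fderiv ℝ f p) u = (inner ℝ y u : ℝ) := by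
    intro y hy u
    have h1 : HasDerivAt (fun t : ℝ => p + t • u) u 0 := by
      simpa using ((hasDerivAt_id (0 : ℝ)).smul_const u).const_add p
    have hdp : HasFDerivAt f (fderiv ℝ f p) ((fun t : ℝ => p + t • u) 0) := by
      simpa using hd.hasFDerivAt
    have h2 : HasDerivAt (fun t : ℝ => f (p + t • u)) ((fderiv ℝ f p) u) 0 :=
      hdp.comp_hasDerivAt 0 h1
    have hg : HasDerivAt (fun t : ℝ => f (p + t • u) - t * (inner ℝ y u : ℝ))
        ((fderiv ℝ f p) u - (inner ℝ y u : ℝ)) 0 :=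
      h2.sub (hasDerivAt_mul_const _)
    have hmin : IsLocalMin (fun t : ℝ => f (p + t • u) - t * (inner ℝ y u : ℝ)) 0 := by
      apply Filter.Eventually.of_forall
      intro t
      have h4 := hy (p + t • u)
      have h3 : (inner ℝ y (p + t • u - p) : ℝ) = t * (inner ℝ y u : ℝ) := by
        simp [inner_smul_right]
      rw [h3] at h4
      show f (p + (0 : ℝ) • u) - (0 : ℝ) * (inner ℝ y u : ℝ) ≤ _
      simp only [zero_smul, add_zero, zero_mul, sub_zero]
      linarith
    have h5 := hmin.hasDerivAt_eq_zero hg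
    linarith [h5]
  have h4 : ∀ u : E, (inner ℝ (x - x') u : ℝ) = 0 := by
    intro u
    have k1 := key x hx u
    have k2 := key x' hx' u
    rw [inner_sub_left]
    linarith
  have h6 := h4 (x - x')
  rw [inner_self_eq_zero, sub_eq_zero] at h6
  exact h6

/-- for a convex function `v` on a domain `Ω ⊆ ℝᵐ`, the set of vectors
`p` belonging to the subgradient set of more than one point of `Ω` has Lebesgue
measure zero. -/
theorem measure_zero_of_multivalued_subgradients (m : ℕ)
    (Ω : Set (EuclideanSpace ℝ (Fin m))) (hΩopen : IsOpen Ω) (hΩconv : Convex ℝ Ω)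
    (v : EuclideanSpace ℝ (Fin m) → ℝ) (hv : ConvexOn ℝ Ω v) :
    volume {p : EuclideanSpace ℝ (Fin m) | ∃ x ∈ Ω, ∃ x' ∈ Ω, x ≠ x' ∧
      p ∈ subgradientSet Ω v x ∧ p ∈ subgradientSet Ω v x'} = 0 := by
  set B := {p : EuclideanSpace ℝ (Fin m) | ∃ x ∈ Ω, ∃ x' ∈ Ω, x ≠ x' ∧
      p ∈ subgradientSet Ω v x ∧ p ∈ subgradientSet Ω v x'} with hBdef
  rcases B.eq_empty_or_nonempty with hB | ⟨pst, xst, hxstΩ, _, _, _, hsubst, _⟩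
  · rw [hB]; simp
  -- global affine lower bound for `v` on `Ω`
  have lowb : ∀ y ∈ Ω, v xst + (inner ℝ pst (y - xst) : ℝ) ≤ v y := hsubst
  -- truncated Legendre transforms
  set K : ℕ → Set (EuclideanSpace ℝ (Fin m)) := fun n => {x ∈ Ω | ‖x‖ ≤ n} with hKdef
  set f : ℕ → EuclideanSpace ℝ (Fin m) → ℝ :=
    fun n p => sSup ((fun x => (inner ℝ p x : ℝ) - v x) '' K n) with hfdef
  have hbdd : ∀ (n : ℕ) (p : EuclideanSpace ℝ (Fin m)),
      BddAbove ((fun x => (inner ℝ p x : ℝ) - v x) '' K n) := by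
    intro n p
    refine ⟨‖p‖ * n - v xst + ‖pst‖ * (n + ‖xst‖), ?_⟩
    rintro r ⟨x, ⟨hxΩ, hxn⟩, rfl⟩
    show (inner ℝ p x : ℝ) - v x ≤ _
    have h1 : (inner ℝ p x : ℝ) ≤ ‖p‖ * n :=
      (real_inner_le_norm p x).trans (by nlinarith [norm_nonneg p])
    have h2 : v xst + (inner ℝ pst (x - xst) : ℝ) ≤ v x := lowb x hxΩ
    have h3 : -(‖pst‖ * (n + ‖xst‖)) ≤ (inner ℝ pst (x - xst) : ℝ) := by
      have h4 : ‖x - xst‖ ≤ n + ‖xst‖ := by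
        have := norm_sub_le x xst; linarith
      have h5 : ‖pst‖ * ‖x - xst‖ ≤ ‖pst‖ * (n + ‖xst‖) := by
        nlinarith [norm_nonneg pst]
      cases abs_le.mp ((abs_real_inner_le_norm pst (x - xst)).trans h5) with
      | intro hl hr => linarith
    linarith
  -- each `f n` is Lipschitz
  have hlip : ∀ n : ℕ, LipschitzWith n (f n) := by
    intro n
    have hone : ∀ p q : EuclideanSpace ℝ (Fin m), f n p ≤ f n q + n * ‖p - q‖ := by
      intro p q
      rcases (K n).eq_empty_or_nonempty with hK | hK
      · simp only [hfdef, hK, image_empty, Real.sSup_empty]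
        positivity
      · refine csSup_le (hK.image _) ?_
        rintro r ⟨x, hx, rfl⟩
        show (inner ℝ p x : ℝ) - v x ≤ _
        have h1 : (inner ℝ q x : ℝ) - v x ≤ f n q :=
          le_csSup (hbdd n q) (mem_image_of_mem _ hx)
        have h2 : (inner ℝ (p - q) x : ℝ) ≤ (n : ℝ) * ‖p - q‖ := by
          have h6 := (real_inner_le_norm (p - q) x).trans
            (mul_le_mul_of_nonneg_left hx.2 (norm_nonneg _))
          linarith [mul_comm ‖p - q‖ (n : ℝ), h6]
        have h3 : (inner ℝ (p - q) x : ℝ) = (inner ℝ p x : ℝ) - (inner ℝ q x : ℝ) :=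
          inner_sub_left p q x
        linarith
    refine LipschitzWith.of_dist_le_mul fun p q => ?_
    rw [Real.dist_eq, dist_eq_norm, abs_sub_le_iff]
    simp only [NNReal.coe_natCast]
    constructor
    · linarith [hone p q]
    · have h8 := hone q p
      rw [norm_sub_rev q p] at h8
      linarith
  -- the bad set is contained in the non-differentiability sets
  have hsub : B ⊆ ⋃ n : ℕ, {p : EuclideanSpace ℝ (Fin m) | ¬ DifferentiableAt ℝ (f n) p} := by
    rintro p ⟨x, hxΩ, x', hx'Ω, hne, hpx, hpx'⟩
    set n : ℕ := ⌈max ‖x‖ ‖x'‖⌉₊ with hn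
    have hxK : x ∈ K n := ⟨hxΩ, le_trans (le_max_left _ _) (Nat.le_ceil _)⟩
    have hx'K : x' ∈ K n := ⟨hx'Ω, le_trans (le_max_right _ _) (Nat.le_ceil _)⟩
    refine mem_iUnion.2 ⟨n, fun hd => hne ?_⟩
    -- supremum attained at any subgradient point
    have hattain : ∀ z : EuclideanSpace ℝ (Fin m), z ∈ K n → p ∈ subgradientSet Ω v z →
        f n p = (inner ℝ p z : ℝ) - v z := by
      intro z hzK hz
      refine le_antisymm (csSup_le ⟨_, mem_image_of_mem _ hzK⟩ ?_)
        (le_csSup (hbdd n p) (mem_image_of_mem _ hzK))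
      rintro r ⟨y, ⟨hyΩ, _⟩, rfl⟩
      show (inner ℝ p y : ℝ) - v y ≤ _
      have h7 := hz y hyΩ
      have h3 : (inner ℝ p (y - z) : ℝ) = (inner ℝ p y : ℝ) - (inner ℝ p z : ℝ) :=
        inner_sub_right p y z
      linarith
    have hsg : ∀ z : EuclideanSpace ℝ (Fin m), z ∈ K n → p ∈ subgradientSet Ω v z →
        ∀ q : EuclideanSpace ℝ (Fin m), f n p + (inner ℝ z (q - p) : ℝ) ≤ f n q := by
      intro z hzK hz q
      have h1 : (inner ℝ q z : ℝ) - v z ≤ f n q :=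
        le_csSup (hbdd n q) (mem_image_of_mem _ hzK)
      have h2 : f n p = (inner ℝ p z : ℝ) - v z := hattain z hzK hz
      have h3 : (inner ℝ z (q - p) : ℝ) = (inner ℝ q z : ℝ) - (inner ℝ p z : ℝ) := by
        rw [inner_sub_right, real_inner_comm z q, real_inner_comm z p]
      linarith
    exact subgrad_unique hd (hsg x hxK hpx) (hsg x' hx'K hpx')
  refine measure_mono_null hsub (measure_iUnion_null fun n => ?_)
  have hae := (hlip n).ae_differentiableAt (μ := volume)
  rwa [MeasureTheory.ae_iff] at hae
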